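/- Let (H₁, …, H_{d+1}) be a generating (d+1)-tuple of half-spaces in a Euclidean d-space V, and define the corresponding simplicial cones Bᵢ = ⋂_{j ≠ i} Hⱼ. If points bᵢ ∈ relint Bᵢ are chosen for each i = 1, …, d+1, then conv{b₁, …, b_{d+1}} is a nondegenerate d-simplex and the origin lies in its relative interior. -/

import Mathlib

open Set Finset Module

lemma intrinsicInterior_subset_interior_of_affineSpan_eq_top
    {E : Type*} [NormedAddCommGroup E] [NormedSpace ℝ E] {s : Set E}
    (hs : affineSpan ℝ s = ⊤) : intrinsicInterior ℝ s ⊆ interior s := by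
  rintro x ⟨y, hy, rfl⟩
  have hopen : IsOpen ((affineSpan ℝ s : Set E)) := by
    rw [hs]; simpa using isOpen_univ
  have himg : (Subtype.val '' interior ((Subtype.val : affineSpan ℝ s → E) ⁻¹' s)) ⊆ interior s :=
    interior_maximal (Set.image_subset_iff.2 fun z hz => interior_subset hz)
      (hopen.isOpenMap_subtype_val _ isOpen_interior)
  exact himg ⟨y, hy, rfl⟩

theorem stmt1 (d : ℕ) (n : Fin (d + 1) → EuclideanSpace ℝ (Fin d))
    (hunit : ∀ i, ‖n i‖ = 1)
    (hgen : (⋂ i, {x : EuclideanSpace ℝ (Fin d) | (inner ℝ (n i) x : ℝ) ≤ 0}) = {0})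
    (B : Fin (d + 1) → Set (EuclideanSpace ℝ (Fin d)))
    (hB : ∀ i, B i = ⋂ j, ⋂ (_ : j ≠ i), {x : EuclideanSpace ℝ (Fin d) | (inner ℝ (n j) x : ℝ) ≤ 0})
    (b : Fin (d + 1) → EuclideanSpace ℝ (Fin d))
    (hb : ∀ i, b i ∈ intrinsicInterior ℝ (B i)) :
    AffineIndependent ℝ b ∧
      (0 : EuclideanSpace ℝ (Fin d)) ∈ intrinsicInterior ℝ (convexHull ℝ (Set.range b)) := by
  classical
  have hzero : ∀ x : EuclideanSpace ℝ (Fin d),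
      (∀ k, (inner ℝ (n k) x : ℝ) ≤ 0) → x = 0 := by
    intro x hx
    have : x ∈ ⋂ i, {x : EuclideanSpace ℝ (Fin d) | (inner ℝ (n i) x : ℝ) ≤ 0} :=
      Set.mem_iInter.2 hx
    rw [hgen] at this
    exact this
  -- strict inequalities
  have hlt : ∀ j k, k ≠ j → (inner ℝ (n k) (b j) : ℝ) < 0 := by
    intro j k hkj
    -- the linear map x ↦ (⟪n m, x⟫)_{m ≠ j}
    set F : EuclideanSpace ℝ (Fin d) →ₗ[ℝ] ({m : Fin (d + 1) // m ≠ j} → ℝ) :=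
      LinearMap.pi (fun m : {m : Fin (d + 1) // m ≠ j} => (innerSL ℝ (n m.1)).toLinearMap)
      with hF
    have hFinj : Function.Injective F := by
      rw [← LinearMap.ker_eq_bot, LinearMap.ker_eq_bot']
      intro x hx
      have h0 : ∀ m : Fin (d + 1), m ≠ j → (inner ℝ (n m) x : ℝ) = 0 := by
        intro m hm
        exact congrFun hx ⟨m, hm⟩
      by_cases hj : (inner ℝ (n j) x : ℝ) ≤ 0
      · exact hzero x fun m => by
          by_cases hm : m = j
          · rwa [hm]
          · exact le_of_eq (h0 m hm)
      · have : -x = 0 := hzero (-x) fun m => by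
          rw [inner_neg_right]
          by_cases hm : m = j
          · rw [hm]; linarith [lt_of_not_ge hj]
          · rw [h0 m hm]; simp
        simpa using congrArg Neg.neg this
    have hcard : finrank ℝ (EuclideanSpace ℝ (Fin d))
        = finrank ℝ ({m : Fin (d + 1) // m ≠ j} → ℝ) := by
      rw [finrank_euclideanSpace_fin, Module.finrank_fintype_fun_eq_card,
        Fintype.card_subtype_compl, Fintype.card_subtype_eq, Fintype.card_fin]
      omega
    have hFsurj : Function.Surjective F :=
      (LinearMap.injective_iff_surjective_of_finrank_eq_finrank hcard).1 hFinj
    obtain ⟨x₀, hx₀⟩ := hFsurj (fun _ => (-1 : ℝ))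
    have hx₀' : ∀ m : Fin (d + 1), m ≠ j → (inner ℝ (n m) x₀ : ℝ) = -1 := by
      intro m hm; exact congrFun hx₀ ⟨m, hm⟩
    -- B j has nonempty interior, via the open set U
    set U : Set (EuclideanSpace ℝ (Fin d)) :=
      ⋂ m, ⋂ (_ : m ≠ j), {x : EuclideanSpace ℝ (Fin d) | (inner ℝ (n m) x : ℝ) < 0} with hU
    have hUopen : IsOpen U := by
      refine isOpen_iInter_of_finite fun m => isOpen_iInter_of_finite fun hm => ?_
      exact isOpen_lt (Continuous.inner continuous_const continuous_id) continuous_const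
    have hUsub : U ⊆ B j := by
      rw [hB j]
      intro x hx
      refine Set.mem_iInter.2 fun m => Set.mem_iInter.2 fun hm => ?_
      have hx2 : (inner ℝ (n m) x : ℝ) < 0 := Set.mem_iInter.1 (Set.mem_iInter.1 hx m) hm
      exact le_of_lt hx2
    have hx₀U : x₀ ∈ U := by
      refine Set.mem_iInter.2 fun m => Set.mem_iInter.2 fun hm => ?_
      rw [Set.mem_setOf_eq, hx₀' m hm]; norm_num
    have hspanB : affineSpan ℝ (B j) = ⊤ := by
      refine top_unique ?_
      rw [← hUopen.affineSpan_eq_top ⟨x₀, hx₀U⟩]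
      exact affineSpan_mono ℝ hUsub
    have hbj : b j ∈ interior (B j) :=
      intrinsicInterior_subset_interior_of_affineSpan_eq_top hspanB (hb j)
    -- now conclude strict inequality
    obtain ⟨ε, hε, hball⟩ := Metric.isOpen_iff.1 isOpen_interior (b j) hbj
    have hle : (inner ℝ (n k) (b j) : ℝ) ≤ 0 := by
      have : b j ∈ B j := interior_subset hbj
      rw [hB j] at this
      exact Set.mem_iInter.1 (Set.mem_iInter.1 this k) hkj
    rcases lt_or_eq_of_le hle with h | h
    · exact h
    · exfalso
      have hy : b j + (ε / 2) • n k ∈ B j := by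
        apply interior_subset
        apply hball
        rw [Metric.mem_ball, dist_eq_norm]
        have : ‖b j + (ε / 2) • n k - b j‖ = ε / 2 := by
          simp [norm_smul, hunit k, abs_of_pos hε]
        rw [this]; linarith
      rw [hB j] at hy
      have := Set.mem_iInter.1 (Set.mem_iInter.1 hy k) hkj
      rw [Set.mem_setOf_eq, inner_add_right, real_inner_smul_right, ← h,
        real_inner_self_eq_norm_sq, hunit k] at this
      nlinarith
  -- main combinatorial lemma
  have strict : ∀ (w : Fin (d + 1) → ℝ) (k : Fin (d + 1)), (∀ m, 0 ≤ w m) → w k = 0 →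
      (∃ m, 0 < w m) → (inner ℝ (n k) (∑ m, w m • b m) : ℝ) < 0 := by
    intro w k hw hwk ⟨m₀, hm₀⟩
    rw [inner_sum]
    have hterm : ∀ m, 0 < w m → (inner ℝ (n k) (w m • b m) : ℝ) < 0 := by
      intro m hm
      have hmk : m ≠ k := fun h => by rw [h, hwk] at hm; exact lt_irrefl _ hm
      rw [real_inner_smul_right]
      exact mul_neg_of_pos_of_neg hm (hlt m k (Ne.symm hmk))
    calc (∑ m, (inner ℝ (n k) (w m • b m) : ℝ)) < ∑ _m : Fin (d+1), (0:ℝ) := by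
          refine Finset.sum_lt_sum (fun m _ => ?_) ⟨m₀, Finset.mem_univ _, hterm m₀ hm₀⟩
          rcases lt_or_eq_of_le (hw m) with h | h
          · exact le_of_lt (hterm m h)
          · rw [real_inner_smul_right, ← h]; simp
      _ = 0 := by simp
  have core1 : ∀ (c : Fin (d + 1) → ℝ), (∑ m, c m • b m = 0) →
      (∃ i, c i < 0) → (∃ i, 0 < c i) → False := by
    intro c hc ⟨i, hi⟩ ⟨i', hi'⟩
    set wp : Fin (d + 1) → ℝ := fun m => max (c m) 0 with hwp
    set wn : Fin (d + 1) → ℝ := fun m => max (-(c m)) 0 with hwn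
    have hdiff : ∀ m, wp m - wn m = c m := by
      intro m; rcases le_or_gt (c m) 0 with h | h
      · simp [hwp, hwn, max_eq_right h, max_eq_left (by linarith : 0 ≤ -(c m))]
      · simp [hwp, hwn, max_eq_left (le_of_lt h), max_eq_right (by linarith : -(c m) ≤ 0)]
    have hsum : ∑ m, wp m • b m = ∑ m, wn m • b m := by
      have h1 : ∑ m, (wp m - wn m) • b m = 0 := by
        rw [← hc]; exact Finset.sum_congr rfl fun m _ => by rw [hdiff m]
      simp only [sub_smul, Finset.sum_sub_distrib] at h1
      exact sub_eq_zero.1 h1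
    have hwpn : (∀ m, 0 ≤ wp m) ∧ (∀ m, 0 ≤ wn m) :=
      ⟨fun m => le_max_right _ _, fun m => le_max_right _ _⟩
    have hwni : 0 < wn i := by simp only [hwn]; rw [max_eq_left (by linarith)]; linarith
    have hwpi' : 0 < wp i' := by simp only [hwp]; rw [max_eq_left (by linarith)]; linarith
    have hall : ∀ k, (inner ℝ (n k) (∑ m, wp m • b m) : ℝ) ≤ 0 := by
      intro k
      rcases le_or_gt 0 (c k) with h | h
      · rw [hsum]
        refine le_of_lt (strict wn k hwpn.2 ?_ ⟨i, hwni⟩)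
        simp only [hwn]; rw [max_eq_right (by linarith)]
      · refine le_of_lt (strict wp k hwpn.1 ?_ ⟨i', hwpi'⟩)
        simp only [hwp]; rw [max_eq_right (by linarith)]
    have hx0 : ∑ m, wp m • b m = 0 := hzero _ hall
    have hfin : (inner ℝ (n i') (∑ m, wn m • b m) : ℝ) < 0 := by
      refine strict wn i' hwpn.2 ?_ ⟨i, hwni⟩
      simp only [hwn]; rw [max_eq_right (by linarith)]
    rw [← hsum, hx0, inner_zero_right] at hfin
    exact lt_irrefl _ hfin
  have core2 : ∀ (c : Fin (d + 1) → ℝ), (∑ m, c m • b m = 0) → (∀ m, 0 ≤ c m) →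
      (∃ i, c i = 0) → (∃ i, 0 < c i) → False := by
    intro c hc hnn ⟨i, hi⟩ ⟨i', hi'⟩
    have := strict c i hnn hi ⟨i', hi'⟩
    rw [hc, inner_zero_right] at this
    exact lt_irrefl _ this
  -- affine independence
  have hindep : AffineIndependent ℝ b := by
    rw [affineIndependent_iff]
    intro s w hw0 hwb
    by_contra h
    push_neg at h
    obtain ⟨e, hes, hwe⟩ := h
    set c : Fin (d + 1) → ℝ := fun m => if m ∈ s then w m else 0 with hcdef
    have hcsum : ∑ m, c m = 0 := by
      rw [← hw0]
      simp only [hcdef]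
      rw [Finset.sum_ite_mem, Finset.univ_inter]
    have hcb : ∑ m, c m • b m = 0 := by
      rw [← hwb, ← Finset.univ_inter s, ← Finset.sum_ite_mem]
      exact Finset.sum_congr rfl fun m _ => by
        by_cases h : m ∈ s <;> simp [hcdef, h]
    have hce : c e ≠ 0 := by simp [hcdef, hes, hwe]
    have hpos : ∃ m, 0 < c m := by
      by_contra hp
      push_neg at hp
      have := (Finset.sum_eq_zero_iff_of_nonpos (fun m _ => hp m)).1 hcsum e (Finset.mem_univ e)
      exact hce this
    have hneg : ∃ m, c m < 0 := by
      by_contra hp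
      push_neg at hp
      obtain ⟨m, hm⟩ := hpos
      have : 0 < ∑ k, c k :=
        Finset.sum_pos' (fun k _ => hp k) ⟨m, Finset.mem_univ m, hm⟩
      linarith [hcsum ▸ this]
    exact core1 c hcb hneg hpos
  -- the affine basis and barycentric coordinates of 0
  have hspan : affineSpan ℝ (Set.range b) = ⊤ := by
    rw [hindep.affineSpan_eq_top_iff_card_eq_finrank_add_one]
    simp [finrank_euclideanSpace_fin]
  let basis : AffineBasis (Fin (d + 1)) ℝ (EuclideanSpace ℝ (Fin d)) := ⟨b, hindep, hspan⟩
  set c : Fin (d + 1) → ℝ := fun i => basis.coord i 0 with hcdef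
  have hc1 : ∑ i, c i = 1 := basis.sum_coord_apply_eq_one 0
  have hcb : ∑ i, c i • b i = 0 := by
    have := basis.affineCombination_coord_eq_self (0 : EuclideanSpace ℝ (Fin d))
    rwa [Finset.univ.affineCombination_eq_linear_combination _ _
      (basis.sum_coord_apply_eq_one 0)] at this
  have hpos : ∃ i, 0 < c i := by
    by_contra hp
    push_neg at hp
    have : ∑ i, c i ≤ 0 := Finset.sum_nonpos fun i _ => hp i
    linarith
  have hcpos : ∀ i, 0 < c i := by
    intro i
    by_contra hi
    push_neg at hi
    rcases lt_or_eq_of_le hi with h | h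
    · exact core1 c hcb ⟨i, h⟩ hpos
    · have hnn : ∀ m, 0 ≤ c m := by
        intro m
        by_contra hm
        push_neg at hm
        exact core1 c hcb ⟨m, hm⟩ hpos
      exact core2 c hcb hnn ⟨i, h⟩ hpos
  refine ⟨hindep, ?_⟩
  apply interior_subset_intrinsicInterior
  have hrange : Set.range (basis : Fin (d + 1) → EuclideanSpace ℝ (Fin d)) = Set.range b := rfl
  rw [← hrange, basis.interior_convexHull]
  exact hcpos
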